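/- arXiv:2503.23792 — 4 statements merged into one kernel-verified Lean document; each statement's English description precedes it below -/
import Mathlib

section
/- (Swan's independence result.) In the two-period durable goods model, suppose service demand Q_{jt} depends only on the vector of current service prices {P_{kt}} (not on consumer inventories, durability levels themselves, or other-period service prices). Then the firm's profit-maximizing durability choice φ_j solves min_{φ} [c_{j1}(φ) - β·c_{j2}·φ], i.e., the durability choice minimizes the cost of providing a unit of service in period 1 and is independent of both the demand functions and prices. -/
/-- Swan's independence result: when service demand does not depend on
inventories, durability or other-period service prices, the
profit-maximizing durability minimizes the cost of providing a unit of
period-1 service. -/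
theorem stmt_5 (c₁ : ℝ → ℝ) (c₂ β Q₁ Q₂ P₁ P₂ : ℝ)
    (hQ₁ : 0 < Q₁) (hβ : 0 < β)
    (V : ℝ → ℝ)
    (hV : ∀ φ, V φ = (P₁ - c₁ φ + β * c₂ * φ) * Q₁ + β * (P₂ - c₂) * Q₂)
    (φstar : ℝ) (hmem : φstar ∈ Set.Icc (0 : ℝ) 1)
    (hmax : IsMaxOn V (Set.Icc (0 : ℝ) 1) φstar) :
    IsMinOn (fun φ => c₁ φ - β * c₂ * φ) (Set.Icc (0 : ℝ) 1) φstar := by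
  intro φ hφ
  have h := hmax hφ
  simp only [Set.mem_setOf_eq, hV] at h
  simp only [Set.mem_setOf_eq]
  nlinarith [h]
end

section
/- (Proposition on collusion and durability.) In the two-period model, suppose demand decreases in competitors' durability (∂q_{k}/∂φ_j ≤ 0 for k ≠ j and ∂q_j/∂φ_j ≥ 0), product prices are fixed at the no-collusion levels, the cross-inventory effect satisfies ∑_{k} (∂q_{k,1}/∂φ_1)·φ_k·(∂q_{2,2}/∂Ψ_{k,2}) ≤ 0, and the joint profit V₁ + V₂ is strictly concave in φ₁. If φᴼ is firm 1's individually optimal durability (satisfying ∂V₁/∂φ₁ = 0) and φᶜᴰ is the jointly optimal durability (satisfying ∂(V₁+V₂)/∂φ₁ = 0), then φᶜᴰ ≤ φᴼ: collusion on durability weakly lowers product durability. -/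
/-- Collusion on durability weakly lowers durability.  `q₁ q₂` are period-1
demands for products 1 and 2 as functions of firm 1's durability `φ₁`
(prices fixed at no-collusion levels), `Q₂` is firm 2's period-2 demand
(depending on `φ₁` through inventories `Ψ_k = φ_k·q_k`), `dΨ k` is
`∂q_{2,2}/∂Ψ_{k,2}` and `φ₂` is firm 2's durability. -/
theorem stmt_6 (V₁ q₁ q₂ Q₂ : ℝ → ℝ) (dΨ : Fin 2 → ℝ)
    (m₂₁ m₂₂ β φ₂ : ℝ)
    (hβ : 0 < β ∧ β ≤ 1) (hm₂₁ : 0 ≤ m₂₁) (hm₂₂ : 0 ≤ m₂₂)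
    (hV₁ : Differentiable ℝ V₁) (hq₁ : Differentiable ℝ q₁)
    (hq₂ : Differentiable ℝ q₂) (hQ₂ : Differentiable ℝ Q₂)
    -- own demand weakly increases in own durability
    (hown : ∀ φ, 0 ≤ deriv q₁ φ)
    -- competitor's period-1 demand weakly decreases in firm 1's durability
    (hcomp : ∀ φ, deriv q₂ φ ≤ 0)
    -- chain rule for the period-2 demand through inventories
    (hchain : ∀ φ, deriv Q₂ φ = deriv q₁ φ * φ * dΨ 0 + deriv q₂ φ * φ₂ * dΨ 1)
    -- the cross-inventory effect is nonpositive
    (hcross : ∀ φ, deriv q₁ φ * φ * dΨ 0 + deriv q₂ φ * φ₂ * dΨ 1 ≤ 0)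
    (V₂ : ℝ → ℝ)
    (hV₂ : ∀ φ, V₂ φ = m₂₁ * q₂ φ + β * m₂₂ * Q₂ φ)
    -- strict concavity of the joint profit in φ₁
    (hJdiff : ∀ φ, DifferentiableAt ℝ (deriv (fun x => V₁ x + V₂ x)) φ)
    (hconc : ∀ φ, deriv (deriv (fun x => V₁ x + V₂ x)) φ < 0)
    (φO φCD : ℝ)
    (hO : deriv V₁ φO = 0)
    (hCD : deriv (fun x => V₁ x + V₂ x) φCD = 0) :
    φCD ≤ φO := by
  have hβ' := hβ.1
  have hV₂fun : V₂ = fun φ => m₂₁ * q₂ φ + β * m₂₂ * Q₂ φ := funext hV₂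
  have hV₂diff : Differentiable ℝ V₂ := by
    rw [hV₂fun]; exact ((hq₂.const_mul _).add (hQ₂.const_mul _))
  have hderivV₂ : ∀ φ, deriv V₂ φ = m₂₁ * deriv q₂ φ + β * m₂₂ * deriv Q₂ φ := by
    intro φ
    rw [hV₂fun]
    rw [deriv_fun_add ((hq₂ φ).const_mul _) ((hQ₂ φ).const_mul _),
      deriv_const_mul _ (hq₂ φ), deriv_const_mul _ (hQ₂ φ)]
  have hderivV₂le : ∀ φ, deriv V₂ φ ≤ 0 := by
    intro φ
    rw [hderivV₂ φ, hchain φ]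
    have h1 : m₂₁ * deriv q₂ φ ≤ 0 :=
      mul_nonpos_of_nonneg_of_nonpos hm₂₁ (hcomp φ)
    have h2 : β * m₂₂ * (deriv q₁ φ * φ * dΨ 0 + deriv q₂ φ * φ₂ * dΨ 1) ≤ 0 :=
      mul_nonpos_of_nonneg_of_nonpos (mul_nonneg hβ'.le hm₂₂) (hcross φ)
    linarith
  have hJsum : ∀ φ, deriv (fun x => V₁ x + V₂ x) φ = deriv V₁ φ + deriv V₂ φ := by
    intro φ; exact deriv_fun_add (hV₁ φ) (hV₂diff φ)
  have hanti : StrictAnti (deriv (fun x => V₁ x + V₂ x)) := by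
    exact strictAnti_of_deriv_neg hconc
  by_contra h
  push_neg at h
  have h1 : deriv (fun x => V₁ x + V₂ x) φCD < deriv (fun x => V₁ x + V₂ x) φO :=
    hanti h
  have h2 : deriv (fun x => V₁ x + V₂ x) φO ≤ 0 := by
    rw [hJsum φO, hO]
    simpa using hderivV₂le φO
  rw [hCD] at h1
  linarith
end

section
/- (Proposition on price levels and durability.) In the two-period model with exogenous service prices, under the assumptions that service demand is independent of durability per se and of other-period service prices, that ∂Q_{j,2}/∂Ψ_{j,2} ≥ 0, that ∂²Q_{j,2}/(∂P_{j,2}∂Ψ_{j,2}) ≥ 0, that P_{j,2} - c_{j,2} ≥ 0, and that the profit is strictly concave in φ_j at the optimum, the cross-partial of firm j's profit satisfies ∂²V_j/(∂φ_j ∂P_{j,2}) ≥ 0 at the optimal durability. Consequently (by the implicit function theorem) the optimal durability φ_j* is weakly increasing in the period-2 service price P_{j,2}. -/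
/-- Higher period-2 service prices raise optimal durability.  `Vφ φ P` is
`∂V_j/∂φ_j` at durability `φ` and period-2 service price `P`; `DΨ P ψ` is
`∂Q_{j,2}/∂Ψ_{j,2}` and `D2 P ψ` is `∂²Q_{j,2}/(∂P_{j,2}∂Ψ_{j,2})`.  The
cross-partial `∂²V_j/(∂φ_j∂P_{j,2})` is nonnegative whenever the markup
`P - c₂` is, and consequently the optimal durability `φstar` (defined by the
first- and second-order conditions) is weakly increasing in `P_{j,2}`. -/
theorem stmt_7 (c₁ : ℝ → ℝ) (β c₂ Q₁ : ℝ)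
    (hβ : 0 < β ∧ β ≤ 1) (hQ₁ : 0 < Q₁)
    (Q₂ DΨ D2 : ℝ → ℝ → ℝ)
    (hDΨ : ∀ P ψ, HasDerivAt (fun x => Q₂ P x) (DΨ P ψ) ψ)
    (hD2 : ∀ P ψ, HasDerivAt (fun p => DΨ p ψ) (D2 P ψ) P)
    (hDΨ0 : ∀ P ψ, 0 ≤ DΨ P ψ)
    (hD20 : ∀ P ψ, 0 ≤ D2 P ψ)
    (Vφ Vφφ : ℝ → ℝ → ℝ)
    (hVφ : ∀ φ P, Vφ φ P =
      (-(deriv c₁ φ) + β * c₂) * Q₁ + β * (P - c₂) * Q₁ * DΨ P (φ * Q₁))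
    (hC1 : ContDiff ℝ 1 (fun q : ℝ × ℝ => Vφ q.1 q.2))
    (hVφφ : ∀ φ P, HasDerivAt (fun x => Vφ x P) (Vφφ φ P) φ)
    (φstar : ℝ → ℝ) (hφstar : Differentiable ℝ φstar)
    (hFOC : ∀ P, Vφ (φstar P) P = 0)
    (hSOC : ∀ P, Vφφ (φstar P) P < 0) :
    (∀ φ P, c₂ ≤ P →
        HasDerivAt (fun p => Vφ φ p)
          (β * Q₁ * (DΨ P (φ * Q₁) + (P - c₂) * D2 P (φ * Q₁))) P ∧
        0 ≤ β * Q₁ * (DΨ P (φ * Q₁) + (P - c₂) * D2 P (φ * Q₁))) ∧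
      MonotoneOn φstar (Set.Ici c₂) := by
  -- The derivative in P holds for all P (not only P ≥ c₂).
  have hder : ∀ φ P, HasDerivAt (fun p => Vφ φ p)
      (β * Q₁ * (DΨ P (φ * Q₁) + (P - c₂) * D2 P (φ * Q₁))) P := by
    intro φ P
    have h1 : HasDerivAt (fun p : ℝ =>
        (-(deriv c₁ φ) + β * c₂) * Q₁ + β * (p - c₂) * Q₁ * DΨ p (φ * Q₁))
        (β * Q₁ * (DΨ P (φ * Q₁) + (P - c₂) * D2 P (φ * Q₁))) P := by
      have hsub : HasDerivAt (fun p : ℝ => β * (p - c₂) * Q₁) (β * Q₁) P := by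
        have := ((hasDerivAt_id P).sub_const c₂).const_mul β
        simpa using (this.mul_const Q₁)
      have hmul := hsub.mul (hD2 P (φ * Q₁))
      have := (hasDerivAt_const P ((-(deriv c₁ φ) + β * c₂) * Q₁)).add hmul
      exact this.congr_deriv (by ring)
    exact h1.congr_of_eventuallyEq (by filter_upwards with p using (hVφ φ p))
  have hnonneg : ∀ φ P, c₂ ≤ P →
      0 ≤ β * Q₁ * (DΨ P (φ * Q₁) + (P - c₂) * D2 P (φ * Q₁)) := by
    intro φ P hP
    have h1 : 0 ≤ DΨ P (φ * Q₁) + (P - c₂) * D2 P (φ * Q₁) :=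
      add_nonneg (hDΨ0 _ _) (mul_nonneg (by linarith) (hD20 _ _))
    exact mul_nonneg (mul_nonneg hβ.1.le hQ₁.le) h1
  refine ⟨fun φ P hP => ⟨hder φ P, hnonneg φ P hP⟩, ?_⟩
  -- derivative of φstar is nonnegative on Ici c₂
  have key : ∀ P, c₂ ≤ P → 0 ≤ deriv φstar P := by
    intro P hP
    set f : ℝ × ℝ → ℝ := fun q => Vφ q.1 q.2 with hf
    have hfd : DifferentiableAt ℝ f (φstar P, P) :=
      (hC1.differentiable one_ne_zero) _
    set L := fderiv ℝ f (φstar P, P) with hL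
    -- L (1,0) = Vφφ
    have h10 : L (1, 0) = Vφφ (φstar P) P := by
      have hin : HasDerivAt (fun x : ℝ => ((x, P) : ℝ × ℝ)) (1, 0) (φstar P) :=
        (hasDerivAt_id _).prodMk (hasDerivAt_const _ _)
      have := hfd.hasFDerivAt.comp_hasDerivAt (φstar P) hin
      exact (this.unique (hVφφ (φstar P) P)).symm ▸ rfl
    -- L (0,1) = cross-partial
    have h01 : L (0, 1) = β * Q₁ * (DΨ P (φstar P * Q₁) +
        (P - c₂) * D2 P (φstar P * Q₁)) := by
      have hin : HasDerivAt (fun p : ℝ => ((φstar P, p) : ℝ × ℝ)) (0, 1) P :=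
        (hasDerivAt_const _ _).prodMk (hasDerivAt_id _)
      have := hfd.hasFDerivAt.comp_hasDerivAt P hin
      exact this.unique (hder (φstar P) P)
    -- total derivative of the FOC
    have hin : HasDerivAt (fun p : ℝ => ((φstar p, p) : ℝ × ℝ))
        (deriv φstar P, 1) P :=
      ((hφstar P).hasDerivAt).prodMk (hasDerivAt_id _)
    have hg' := hfd.hasFDerivAt.comp_hasDerivAt_of_eq P hin rfl
    have hg : HasDerivAt (fun p : ℝ => f (φstar p, p))
        (L (deriv φstar P, 1)) P := hg'
    have hg0 : (fun p : ℝ => f (φstar p, p)) = fun _ => (0 : ℝ) := by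
      funext p; exact hFOC p
    have hzero : L (deriv φstar P, 1) = 0 := by
      have : HasDerivAt (fun _ : ℝ => (0 : ℝ)) (L (deriv φstar P, 1)) P := by
        rwa [hg0] at hg
      exact this.unique (hasDerivAt_const _ _)
    have hsplit : L (deriv φstar P, 1) = deriv φstar P * L (1, 0) + L (0, 1) := by
      have : ((deriv φstar P, 1) : ℝ × ℝ)
          = deriv φstar P • ((1, 0) : ℝ × ℝ) + ((0, 1) : ℝ × ℝ) := by
        simp [Prod.ext_iff]
      rw [this, map_add, map_smul]
      simp [smul_eq_mul]
    have hA := hnonneg (φstar P) P hP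
    have hS := hSOC P
    rw [hsplit, h10, h01] at hzero
    nlinarith [hzero, hA, hS]
  exact monotoneOn_of_deriv_nonneg (convex_Ici c₂)
    hφstar.continuous.continuousOn
    (fun x _ => (hφstar x).differentiableWithinAt)
    (fun x hx => key x (le_of_lt (by simpa using hx)))
end

section
/- Under the rational-expectations transformation, if η_t satisfies β·e_{0,t} + η_t - β·η_{t+1} = 0 and one defines V̂_t = V_t + η_t and δ̂_{j,t} = δ_{j,t} - ∑_{τ≥1} f(μ_j,τ)·η_{t+τ} + e_{j,t} + η_t, then the conditional choice probabilities are invariant: exp(δ_{j,t} + κ_{j,t} + ∑_{τ≥1} f(μ_j,τ)·V_{t+τ} + e_{j,t}) / exp(V_t) = exp(δ̂_{j,t} + κ_{j,t} + ∑_{τ≥1} f(μ_j,τ)·V̂_{t+τ}) / exp(V̂_t), and V̂ satisfies the expectation-error-free Bellman equation V̂_t = log(exp(β·V̂_{t+1}) + ∑_j exp(δ̂_{j,t} + κ_{j,t} + ∑_{τ≥1} f(μ_j,τ)·V̂_{t+τ})). -/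
/-- Rational-expectations transformation: redefining value functions and mean
utilities by the `η`-adjustment leaves conditional choice probabilities
invariant, and the adjusted value function satisfies the
expectation-error-free Bellman equation. -/
theorem stmt_16 {J : Type*} [Fintype J]
    (β α : ℝ) (hβ : 0 < β ∧ β < 1)
    (f : J → ℕ → ℝ) (hf0 : ∀ j, f j 0 = 0) (hf1 : ∀ j, HasSum (f j) 1)
    (V η e0 : ℕ → ℝ) (δ κ e pr : J → ℕ → ℝ)
    (hκ : ∀ j t, κ j t = -α * pr j t)
    (hsumV : ∀ j t, Summable (fun τ : ℕ => f j τ * V (t + τ)))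
    (hsumη : ∀ j t, Summable (fun τ : ℕ => f j τ * η (t + τ)))
    (hBell : ∀ t, V t = Real.log (Real.exp (β * V (t + 1) + β * e0 t) +
      ∑ j, Real.exp (δ j t + κ j t + (∑' τ : ℕ, f j τ * V (t + τ)) + e j t)))
    (hη : ∀ t, β * e0 t + η t - β * η (t + 1) = 0)
    (Vhat : ℕ → ℝ) (hVhat : ∀ t, Vhat t = V t + η t)
    (δhat : J → ℕ → ℝ)
    (hδhat : ∀ j t,
      δhat j t = δ j t - (∑' τ : ℕ, f j τ * η (t + τ)) + e j t + η t) :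
    (∀ t (j : J),
      Real.exp (δ j t + κ j t + (∑' τ : ℕ, f j τ * V (t + τ)) + e j t) /
          Real.exp (V t) =
        Real.exp (δhat j t + κ j t + (∑' τ : ℕ, f j τ * Vhat (t + τ))) /
          Real.exp (Vhat t)) ∧
    (∀ t, Vhat t = Real.log (Real.exp (β * Vhat (t + 1)) +
      ∑ j, Real.exp (δhat j t + κ j t + ∑' τ : ℕ, f j τ * Vhat (t + τ)))) := by
  have hsplit : ∀ (j : J) (t : ℕ),
      (∑' τ : ℕ, f j τ * Vhat (t + τ)) =
        (∑' τ : ℕ, f j τ * V (t + τ)) + (∑' τ : ℕ, f j τ * η (t + τ)) := by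
    intro j t
    have : (fun τ : ℕ => f j τ * Vhat (t + τ)) =
        fun τ : ℕ => f j τ * V (t + τ) + f j τ * η (t + τ) := by
      funext τ; rw [hVhat]; ring
    rw [this, Summable.tsum_add (hsumV j t) (hsumη j t)]
  have hexpeq : ∀ (j : J) (t : ℕ),
      δhat j t + κ j t + (∑' τ : ℕ, f j τ * Vhat (t + τ)) =
        δ j t + κ j t + (∑' τ : ℕ, f j τ * V (t + τ)) + e j t + η t := by
    intro j t
    rw [hsplit, hδhat]; ring
  constructor
  · intro t j
    rw [hexpeq, hVhat,
      Real.exp_add (δ j t + κ j t + (∑' τ : ℕ, f j τ * V (t + τ)) + e j t) (η t),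
      Real.exp_add (V t) (η t),
      mul_div_mul_right _ _ (Real.exp_ne_zero (η t))]
  · intro t
    have hpos : (0:ℝ) < Real.exp (β * V (t + 1) + β * e0 t) +
        ∑ j, Real.exp (δ j t + κ j t + (∑' τ : ℕ, f j τ * V (t + τ)) + e j t) := by
      have : (0:ℝ) ≤ ∑ j, Real.exp (δ j t + κ j t + (∑' τ : ℕ, f j τ * V (t + τ)) + e j t) :=
        Finset.sum_nonneg fun j _ => (Real.exp_pos _).le
      linarith [Real.exp_pos (β * V (t + 1) + β * e0 t)]
    have h1 : β * Vhat (t + 1) = (β * V (t + 1) + β * e0 t) + η t := by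
      have hh := hη t; rw [hVhat]; ring_nf; ring_nf at hh; linarith
    have h2 : ∀ j : J, δhat j t + κ j t + (∑' τ : ℕ, f j τ * Vhat (t + τ)) =
        (δ j t + κ j t + (∑' τ : ℕ, f j τ * V (t + τ)) + e j t) + η t := by
      intro j; rw [hexpeq]
    calc Vhat t = V t + η t := hVhat t
    _ = Real.log (Real.exp (β * V (t + 1) + β * e0 t) +
        ∑ j, Real.exp (δ j t + κ j t + (∑' τ : ℕ, f j τ * V (t + τ)) + e j t)) + η t := by
        rw [← hBell]
    _ = Real.log ((Real.exp (β * V (t + 1) + β * e0 t) +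
        ∑ j, Real.exp (δ j t + κ j t + (∑' τ : ℕ, f j τ * V (t + τ)) + e j t)) *
        Real.exp (η t)) := by
        rw [Real.log_mul (ne_of_gt hpos) (Real.exp_ne_zero _), Real.log_exp]
    _ = Real.log (Real.exp (β * Vhat (t + 1)) +
        ∑ j, Real.exp (δhat j t + κ j t + ∑' τ : ℕ, f j τ * Vhat (t + τ))) := by
        congr 1
        rw [add_mul, Finset.sum_mul]
        congr 1
        · rw [h1, Real.exp_add _ (η t)]
        · exact Finset.sum_congr rfl fun j _ => by rw [h2, Real.exp_add _ (η t)]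
end
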